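/- Let f : ℕ → ℝ⁺. If there exists a constant B such that V_λ(d_f)/E_λ(d_f)² ≤ B for all partitions λ of all n ≥ 2, then there is a constant c with n·Σ_{i=1}^{n−1} f(i)² ≤ c·(n−λ₁)·(Σ_{i=1}^{n−1} f(i))² for every partition λ of n with λ₁ < n. -/

import Mathlib

open Finset

/-- A standard Young tableau of shape `μ`: a bijective filling of the cells of `μ`
with the numbers `1, ..., μ.card`, strictly increasing along rows and columns. -/
structure SYT (μ : YoungDiagram) where
  entry : ℕ → ℕ → ℕ
  row_strict : ∀ ⦃i j1 j2 : ℕ⦄, j1 < j2 → (i, j2) ∈ μ → entry i j1 < entry i j2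
  col_strict : ∀ ⦃i1 i2 j : ℕ⦄, i1 < i2 → (i2, j) ∈ μ → entry i1 j < entry i2 j
  zeros : ∀ ⦃i j : ℕ⦄, (i, j) ∉ μ → entry i j = 0
  bijOn : Set.BijOn (fun c : ℕ × ℕ => entry c.1 c.2) (μ.cells : Set (ℕ × ℕ))
    (Set.Icc 1 μ.card)

/-- `T` has a descent at `i` iff the entry `i+1` lies in a strictly lower row than `i`. -/
def SYT.DescentAt {μ : YoungDiagram} (T : SYT μ) (i : ℕ) : Prop :=
  ∀ c d : ℕ × ℕ, c ∈ μ → d ∈ μ →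
    T.entry c.1 c.2 = i → T.entry d.1 d.2 = i + 1 → c.1 < d.1

theorem SYT.entry_le {μ : YoungDiagram} (T : SYT μ) {c : ℕ × ℕ} (hc : c ∈ μ.cells) :
    T.entry c.1 c.2 ≤ μ.card :=
  (T.bijOn.mapsTo (Finset.mem_coe.mpr hc)).2

noncomputable instance SYT.fintype (μ : YoungDiagram) : Fintype (SYT μ) :=
  Fintype.ofInjective
    (fun (T : SYT μ) (c : μ.cells) =>
      (⟨T.entry c.1.1 c.1.2, Nat.lt_succ_of_le (T.entry_le c.2)⟩ : Fin (μ.card + 1)))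
    (fun T S h => by
      have hent : T.entry = S.entry := by
        funext i j
        by_cases hm : (i, j) ∈ μ
        · exact congrArg Fin.val (congrFun h ⟨(i, j), (YoungDiagram.mem_cells _).mpr hm⟩)
        · rw [T.zeros hm, S.zeros hm]
      cases T; cases S; simpa using hent)

open scoped Classical in
/-- The descent function `d_f(T) = Σ_{i ∈ D(T)} f(i)`. -/
noncomputable def SYT.dfun {μ : YoungDiagram} (f : ℕ → ℝ) (T : SYT μ) : ℝ :=
  ∑ i ∈ (Finset.Icc 1 (μ.card - 1)).filter (fun i => T.DescentAt i), f i

/-- Expectation of `d_f` over uniformly random standard Young tableaux of shape `μ`. -/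
noncomputable def SYT.Eexp (μ : YoungDiagram) (f : ℕ → ℝ) : ℝ :=
  (∑ T : SYT μ, T.dfun f) / (Nat.card (SYT μ) : ℝ)

/-- Variance `V(X) = E(X²) − E(X)²` of `d_f` over uniformly random SYT of shape `μ`. -/
noncomputable def SYT.Vvar (μ : YoungDiagram) (f : ℕ → ℝ) : ℝ :=
  (∑ T : SYT μ, (T.dfun f) ^ 2) / (Nat.card (SYT μ) : ℝ) - (SYT.Eexp μ f) ^ 2

/-- If the normalized variance `V_μ(d_f)/E_μ(d_f)²` is bounded by some constant `B`
over all partition shapes `μ` with `|μ| ≥ 2`, then there is a constant `c` with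
`n·Σ_{i=1}^{n−1} f(i)² ≤ c·(n−λ₁)·(Σ_{i=1}^{n−1} f(i))²` for every shape `μ` with `λ₁ < n`. -/
def hook (m : ℕ) : YoungDiagram where
  cells := (({0} : Finset ℕ) ×ˢ Finset.range (m+1)) ∪ {(1,0)}
  isLowerSet := by
    rintro ⟨a,b⟩ ⟨c,d⟩ ⟨hac, hbd⟩ h
    simp only [Finset.coe_union, Finset.coe_singleton, Finset.coe_product,
      Set.mem_union, Set.mem_prod, Set.mem_singleton_iff, Finset.mem_coe,
      Finset.mem_range, Prod.mk.injEq] at h ⊢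
    simp only at hac hbd
    omega

lemma mem_hook {m i j : ℕ} : (i,j) ∈ hook m ↔ (i = 0 ∧ j ≤ m) ∨ (i = 1 ∧ j = 0) := by
  rw [← YoungDiagram.mem_cells]
  simp [hook, Nat.lt_succ_iff]
  omega

lemma hook_card (m : ℕ) : (hook m).card = m + 2 := by
  show ((({0} : Finset ℕ) ×ˢ Finset.range (m+1)) ∪ {(1,0)}).card = m + 2
  rw [Finset.card_union_of_disjoint (by simp)]
  simp

lemma hook_rowLen (m : ℕ) : (hook m).rowLen 0 = m + 1 := by
  have h1 : (0, m) ∈ hook m := mem_hook.mpr (Or.inl ⟨rfl, le_refl m⟩)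
  have h2 : (0, m+1) ∉ hook m := by simp [mem_hook]
  rw [YoungDiagram.mem_iff_lt_rowLen] at h1 h2
  omega
/-- entry function for the hook SYT with `k+2` in the second row. -/
def hentry (m k : ℕ) : ℕ → ℕ → ℕ := fun i j =>
  if i = 1 ∧ j = 0 then k + 2
  else if i = 0 ∧ j ≤ m then (if j ≤ k then j + 1 else j + 2) else 0

def hookSYT (m k : ℕ) (hk : k ≤ m) : SYT (hook m) where
  entry := hentry m k
  row_strict := by
    intro i j1 j2 hj hm2
    rcases mem_hook.mp hm2 with ⟨hi, hj2⟩ | ⟨hi, hj2⟩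
    · subst hi
      simp only [hentry]
      split_ifs <;> (try simp_all) <;> omega
    · omega
  col_strict := by
    intro i1 i2 j hi hm2
    rcases mem_hook.mp hm2 with ⟨hi2, hj⟩ | ⟨hi2, hj⟩
    · omega
    · subst hi2 hj
      have hi1 : i1 = 0 := by omega
      subst hi1
      simp only [hentry]
      split_ifs <;> (try simp_all) <;> omega
  zeros := by
    intro i j hm2
    rw [mem_hook] at hm2
    push_neg at hm2
    simp only [hentry]
    split_ifs <;> (try simp_all) <;> omega
  bijOn := by
    rw [hook_card]
    constructor
    · rintro ⟨i, j⟩ hc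
      rw [Finset.mem_coe, YoungDiagram.mem_cells, mem_hook] at hc
      simp only [Set.mem_Icc, hentry]
      split_ifs <;> (try simp_all) <;> omega
    constructor
    · rintro ⟨i, j⟩ hc ⟨i', j'⟩ hc' he
      rw [Finset.mem_coe, YoungDiagram.mem_cells, mem_hook] at hc hc'
      simp only [hentry] at he
      split_ifs at he <;> (try simp_all) <;> omega
    · rintro v ⟨hv1, hv2⟩
      by_cases hv : v = k + 2
      · refine ⟨(1, 0), ?_, ?_⟩
        · rw [Finset.mem_coe, YoungDiagram.mem_cells, mem_hook]; omega
        · simp [hentry, hv]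
      by_cases hvk : v ≤ k + 1
      · refine ⟨(0, v - 1), ?_, ?_⟩
        · rw [Finset.mem_coe, YoungDiagram.mem_cells, mem_hook]; omega
        · simp only [hentry]; split_ifs <;> (try simp_all) <;> omega
      · refine ⟨(0, v - 2), ?_, ?_⟩
        · rw [Finset.mem_coe, YoungDiagram.mem_cells, mem_hook]; omega
        · simp only [hentry]; split_ifs <;> (try simp_all) <;> omega
lemma SYT.ext' {μ : YoungDiagram} {T S : SYT μ} (h : T.entry = S.entry) : T = S := by
  cases T; cases S; simpa using h

lemma hook_classify {m : ℕ} (T : SYT (hook m)) :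
    ∃ k : ℕ, ∃ hk : k ≤ m, T = hookSYT m k hk := by
  have hc10 : ((1:ℕ), (0:ℕ)) ∈ (hook m).cells := by
    rw [YoungDiagram.mem_cells, mem_hook]; omega
  have hcard := hook_card m
  -- the value in the second row
  set j0 := T.entry 1 0 with hj0
  have hj0mem : j0 ∈ Set.Icc 1 (hook m).card := T.bijOn.mapsTo (Finset.mem_coe.mpr hc10)
  have hc00 : ((0:ℕ), (0:ℕ)) ∈ hook m := mem_hook.mpr (Or.inl ⟨rfl, Nat.zero_le m⟩)
  have h00lt : T.entry 0 0 < j0 := T.col_strict Nat.zero_lt_one ((YoungDiagram.mem_cells _).mp hc10)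
  have h00mem : T.entry 0 0 ∈ Set.Icc 1 (hook m).card :=
    T.bijOn.mapsTo (Finset.mem_coe.mpr ((YoungDiagram.mem_cells _).mpr hc00))
  have hj0ge : 2 ≤ j0 := by
    have := h00mem.1; omega
  have hj0le : j0 ≤ m + 2 := by rw [hcard] at hj0mem; exact hj0mem.2
  refine ⟨j0 - 2, by omega, ?_⟩
  -- both row-0 sequences are the unique strictly monotone enumeration of s
  set s : Finset ℕ := (Finset.Icc 1 (m+2)).erase j0 with hs
  have hscard : s.card = m + 1 := by
    rw [hs, Finset.card_erase_of_mem (by simp [Finset.mem_Icc]; omega), Nat.card_Icc]; omega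
  have hrow0mem : ∀ c : ℕ, c ≤ m → (0, c) ∈ (hook m).cells := by
    intro c hc; rw [YoungDiagram.mem_cells, mem_hook]; omega
  have hFmem : ∀ x : Fin (m+1), T.entry 0 x ∈ s := by
    intro x
    have hx := hrow0mem x (Nat.lt_succ_iff.mp x.2)
    have h1 := T.bijOn.mapsTo (Finset.mem_coe.mpr hx)
    rw [hcard] at h1
    rw [hs, Finset.mem_erase, Finset.mem_Icc]
    refine ⟨?_, h1.1, h1.2⟩
    intro heq
    have := T.bijOn.injOn (Finset.mem_coe.mpr hx) (Finset.mem_coe.mpr hc10) heq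
    simp at this
  have hFmono : StrictMono (fun x : Fin (m+1) => T.entry 0 x) := by
    intro a b hab
    exact T.row_strict hab ((YoungDiagram.mem_cells _).mp (hrow0mem b (Nat.lt_succ_iff.mp b.2)))
  have hGmem : ∀ x : Fin (m+1), (hookSYT m (j0-2) (by omega)).entry 0 x ∈ s := by
    intro x
    have hx : (x : ℕ) ≤ m := Nat.lt_succ_iff.mp x.2
    show hentry m (j0-2) 0 x ∈ s
    rw [hs, Finset.mem_erase, Finset.mem_Icc]
    simp only [hentry]
    split_ifs <;> (try simp_all) <;> omega
  have hGmono : StrictMono (fun x : Fin (m+1) => (hookSYT m (j0-2) (by omega)).entry 0 x) := by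
    intro a b hab
    exact (hookSYT m (j0-2) (by omega)).row_strict hab
      ((YoungDiagram.mem_cells _).mp (hrow0mem b (Nat.lt_succ_iff.mp b.2)))
  have hF := Finset.orderEmbOfFin_unique hscard hFmem hFmono
  have hG := Finset.orderEmbOfFin_unique hscard hGmem hGmono
  apply SYT.ext'
  funext i j
  by_cases hm2 : (i, j) ∈ hook m
  · rcases mem_hook.mp hm2 with ⟨hi, hj⟩ | ⟨hi, hj⟩
    · subst hi
      have := congrFun hF ⟨j, by omega⟩
      have h2 := congrFun hG ⟨j, by omega⟩
      simp only at this h2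
      rw [this, h2]
    · subst hi; subst hj
      show j0 = hentry m (j0-2) 1 0
      simp [hentry]; omega
  · rw [T.zeros hm2, (hookSYT m (j0-2) (by omega)).zeros hm2]
lemma hook_descent_iff {m k : ℕ} (hk : k ≤ m) {i : ℕ} (hi1 : 1 ≤ i) (hi2 : i ≤ m + 1) :
    (hookSYT m k hk).DescentAt i ↔ i = k + 1 := by
  constructor
  · intro hd
    by_contra hne
    -- exhibit a counterexample pair of cells
    by_cases hik : i = k + 2
    · -- i at (1,0), i+1 at (0, k+1)
      have := hd (1, 0) (0, k+1) (mem_hook.mpr (by omega)) (mem_hook.mpr (by omega))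
        (by simp [hookSYT, hentry]; omega) (by simp [hookSYT, hentry]; split_ifs <;> (try simp_all) <;> omega)
      simp at this
    · by_cases hlt : i ≤ k
      · -- both in row 0 : i at (0,i-1), i+1 at (0,i)
        have := hd (0, i-1) (0, i) (mem_hook.mpr (by omega)) (mem_hook.mpr (by omega))
          (by simp only [hookSYT, hentry]; split_ifs <;> (try simp_all) <;> omega)
          (by simp only [hookSYT, hentry]; split_ifs <;> (try simp_all) <;> omega)
        simp at this
      · -- i ≥ k+3 : i at (0,i-2), i+1 at (0,i-1)
        have := hd (0, i-2) (0, i-1) (mem_hook.mpr (by omega)) (mem_hook.mpr (by omega))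
          (by simp only [hookSYT, hentry]; split_ifs <;> (try simp_all) <;> omega)
          (by simp only [hookSYT, hentry]; split_ifs <;> (try simp_all) <;> omega)
        simp at this
  · rintro rfl
    rintro ⟨c1, c2⟩ ⟨d1, d2⟩ hc hd hec hed
    rcases mem_hook.mp hc with ⟨hc1, hc2⟩ | ⟨hc1, hc2⟩ <;>
      rcases mem_hook.mp hd with ⟨hd1, hd2⟩ | ⟨hd1, hd2⟩ <;>
      subst hc1 <;> subst hd1 <;>
      simp only [hookSYT, hentry] at hec hed <;>
      split_ifs at hec hed <;> (try simp_all) <;> omega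
lemma hook_dfun {m k : ℕ} (hk : k ≤ m) (f : ℕ → ℝ) :
    (hookSYT m k hk).dfun f = f (k + 1) := by
  classical
  have hfil : ((Finset.Icc 1 ((hook m).card - 1)).filter
      (fun i => (hookSYT m k hk).DescentAt i)) = {k+1} := by
    ext i
    simp only [Finset.mem_filter, Finset.mem_Icc, Finset.mem_singleton, hook_card]
    constructor
    · rintro ⟨⟨h1, h2⟩, hd⟩
      exact (hook_descent_iff hk h1 (by omega)).mp hd
    · rintro rfl
      exact ⟨⟨by omega, by omega⟩, (hook_descent_iff hk (by omega) (by omega)).mpr rfl⟩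
  rw [SYT.dfun, hfil, Finset.sum_singleton]

noncomputable def hookEquiv (m : ℕ) : Fin (m+1) ≃ SYT (hook m) :=
  Equiv.ofBijective (fun k => hookSYT m k (Nat.lt_succ_iff.mp k.2))
    ⟨by
      intro a b hab
      have h2 := congrArg (fun T : SYT (hook m) => T.entry 1 0) hab
      simp [hookSYT, hentry] at h2
      exact Fin.ext h2,
     by
      intro T
      obtain ⟨k, hk, rfl⟩ := hook_classify T
      exact ⟨⟨k, by omega⟩, rfl⟩⟩

lemma hook_natCard (m : ℕ) : Nat.card (SYT (hook m)) = m + 1 := by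
  rw [← Nat.card_congr (hookEquiv m)]
  simp

lemma hook_sum (m : ℕ) (f : ℕ → ℝ) (g : ℝ → ℝ) :
    ∑ T : SYT (hook m), g (T.dfun f) = ∑ i ∈ Finset.Icc 1 (m+1), g (f i) := by
  rw [← Equiv.sum_comp (hookEquiv m) (fun T => g (T.dfun f))]
  have : ∀ k : Fin (m+1), g ((hookEquiv m k).dfun f) = g (f (k + 1)) := by
    intro k
    exact congrArg g (hook_dfun (Nat.lt_succ_iff.mp k.2) f)
  rw [Finset.sum_congr rfl (fun k _ => this k)]
  rw [Fin.sum_univ_eq_sum_range (fun k => g (f (k+1)))]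
  have him : Finset.Icc 1 (m+1) = Finset.image (· + 1) (Finset.range (m+1)) := by
    ext x
    simp only [Finset.mem_Icc, Finset.mem_image, Finset.mem_range]
    constructor
    · rintro ⟨h1, h2⟩; exact ⟨x - 1, by omega, by omega⟩
    · rintro ⟨a, ha, rfl⟩; omega
  rw [him, Finset.sum_image (by intros a _ b _ hab; simp only at hab; omega)]
theorem ineq_of_normalized_variance_bounded (f : ℕ → ℝ) (hf : ∀ i, 0 < f i)
    (h : ∃ B : ℝ, ∀ μ : YoungDiagram, 2 ≤ μ.card →
      SYT.Vvar μ f / (SYT.Eexp μ f) ^ 2 ≤ B) :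
    ∃ c : ℝ, ∀ μ : YoungDiagram, μ.rowLen 0 < μ.card →
      (μ.card : ℝ) * (∑ i ∈ Finset.Icc 1 (μ.card - 1), (f i) ^ 2) ≤
        c * ((μ.card : ℝ) - (μ.rowLen 0 : ℝ)) *
          (∑ i ∈ Finset.Icc 1 (μ.card - 1), f i) ^ 2 := by
  obtain ⟨B, hB⟩ := h
  set B' : ℝ := max B 0 with hB'
  have hB'0 : 0 ≤ B' := le_max_right _ _
  have hBB' : B ≤ B' := le_max_left _ _
  have key : ∀ m : ℕ, ((m:ℝ)+1) * (∑ i ∈ Finset.Icc 1 (m+1), (f i)^2) ≤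
      (B'+1) * (∑ i ∈ Finset.Icc 1 (m+1), f i)^2 := by
    intro m
    have h2 := hB (hook m) (by rw [hook_card]; omega)
    set N : ℝ := (m:ℝ) + 1 with hNdef
    set S1 := ∑ i ∈ Finset.Icc 1 (m+1), f i with hS1
    set S2 := ∑ i ∈ Finset.Icc 1 (m+1), (f i)^2 with hS2
    have hN : (0:ℝ) < N := by positivity
    have hS1pos : 0 < S1 := Finset.sum_pos (fun i _ => hf i)
      ⟨1, by simp⟩
    have hsum1 : (∑ T : SYT (hook m), T.dfun f) = S1 := hook_sum m f (fun x => x)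
    have hsum2 : (∑ T : SYT (hook m), (T.dfun f)^2) = S2 := hook_sum m f (fun x => x^2)
    have hE : SYT.Eexp (hook m) f = S1 / N := by
      rw [SYT.Eexp, hook_natCard, hsum1]
      push_cast
      rfl
    have hV : SYT.Vvar (hook m) f = S2 / N - (S1 / N)^2 := by
      rw [SYT.Vvar, hook_natCard, hsum2, hE]
      push_cast
      rfl
    have hEpos : 0 < SYT.Eexp (hook m) f := by rw [hE]; positivity
    have h3 : SYT.Vvar (hook m) f ≤ B * (SYT.Eexp (hook m) f)^2 := by
      rw [div_le_iff₀ (by positivity)] at h2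
      linarith
    rw [hV, hE, div_pow] at h3
    have h4 : S2 / N ≤ (B'+1) * (S1^2 / N^2) := by
      have e : (B+1) * (S1^2/N^2) ≤ (B'+1) * (S1^2/N^2) := by
        apply mul_le_mul_of_nonneg_right (by linarith) (by positivity)
      nlinarith [h3]
    have h5 := mul_le_mul_of_nonneg_left h4 (le_of_lt (mul_pos hN hN))
    have e1 : N * N * (S2 / N) = N * S2 := by field_simp
    have e2 : N * N * ((B'+1) * (S1^2 / N^2)) = (B'+1) * S1^2 := by
      field_simp
    rw [e1, e2] at h5
    exact h5
  refine ⟨2 * (B' + 1), ?_⟩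
  intro μ hμ
  have hcard1 : 1 ≤ μ.card := by omega
  obtain ⟨c0, hc0⟩ := Finset.card_pos.mp (show 0 < μ.cells.card from hcard1)
  have h00 : ((0:ℕ), (0:ℕ)) ∈ μ := by
    have := μ.isLowerSet (b := ((0:ℕ),(0:ℕ)))
      ⟨Nat.zero_le _, Nat.zero_le _⟩ (Finset.mem_coe.mpr hc0)
    exact (YoungDiagram.mem_cells _).mp (Finset.mem_coe.mp this)
  have hrl : 1 ≤ μ.rowLen 0 := by
    rw [YoungDiagram.mem_iff_lt_rowLen] at h00; omega
  have hn2 : 2 ≤ μ.card := by omega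
  set n := μ.card with hn
  set l := μ.rowLen 0 with hl
  have hkey := key (n - 2)
  have hm1 : n - 2 + 1 = n - 1 := by omega
  rw [hm1] at hkey
  set S1 := ∑ i ∈ Finset.Icc 1 (n-1), f i with hS1
  set S2 := ∑ i ∈ Finset.Icc 1 (n-1), (f i)^2 with hS2
  have hcast : ((n - 2 : ℕ) : ℝ) + 1 = (n : ℝ) - 1 := by
    have : ((n - 2 : ℕ) : ℝ) = (n : ℝ) - 2 := by
      push_cast [Nat.cast_sub hn2]; ring
    rw [this]; ring
  rw [hcast] at hkey
  have hS1pos : 0 < S1 := Finset.sum_pos (fun i _ => hf i)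
    ⟨1, by simp [Finset.mem_Icc]; omega⟩
  have hS2pos : 0 < S2 := Finset.sum_pos (fun i _ => pow_pos (hf i) 2)
    ⟨1, by simp [Finset.mem_Icc]; omega⟩
  have hln : (l : ℝ) ≤ (n : ℝ) - 1 := by
    have : l ≤ n - 1 := by omega
    have h2 := Nat.cast_le (α := ℝ).mpr this
    have h3 : ((n - 1 : ℕ) : ℝ) = (n : ℝ) - 1 := by push_cast [Nat.cast_sub hcard1]; ring
    rw [h3] at h2; exact h2
  have hnge : (2:ℝ) ≤ (n : ℝ) := by exact_mod_cast hn2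
  have hint1 : 0 ≤ ((n:ℝ) - 2) * S2 := mul_nonneg (by linarith) hS2pos.le
  have hint2 : 0 ≤ ((n:ℝ) - (l:ℝ) - 1) * ((B'+1) * S1^2) :=
    mul_nonneg (by linarith) (mul_nonneg (by linarith) (sq_nonneg S1))
  have e : 2*(B'+1) * ((n:ℝ) - (l:ℝ)) * S1^2 =
      2*((B'+1)*S1^2) + 2*(((n:ℝ) - (l:ℝ) - 1) * ((B'+1)*S1^2)) := by ring
  linarith [hkey, hint1, hint2, e]
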